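/- Let H be a model graph, a, b, c, d positive integers with n = a+b+c+d, and let m be an integer with Σ_{(p,q)∈Full(H)} (#p)(#q) ≤ m ≤ n(n−1)/2 − Σ_{(p,q)∈Dotted(H)} (#p)(#q). Then there exists a simple undirected graph G with n vertices and exactly m edges admitting an H-partition with class sizes a, b, c, d. -/

import Mathlib

inductive Label : Type
  | A | B | C | D
deriving DecidableEq

instance : Fintype Label :=
  ⟨{Label.A, Label.B, Label.C, Label.D}, by intro x; cases x <;> simp⟩

/-- A model graph: an undirected graph on the four labels A,B,C,D, each edge
marked full or dotted (never both), symmetric and irreflexive. -/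
structure ModelGraph : Type where
  full : Label → Label → Bool
  dotted : Label → Label → Bool
  full_symm : ∀ p q, full p q = full q p
  dotted_symm : ∀ p q, dotted p q = dotted q p
  full_irrefl : ∀ p, full p p = false
  dotted_irrefl : ∀ p, dotted p p = false
  not_both : ∀ p q, ¬ (full p q = true ∧ dotted p q = true)

/-- `ℓ` is an `H`-partition of `G`: all four classes nonempty, full edges of `H`
force complete adjacency, dotted edges force complete nonadjacency. -/
def IsHPartition {V : Type} (G : SimpleGraph V) (H : ModelGraph) (ℓ : V → Label) : Prop :=
  (∀ p : Label, ∃ v, ℓ v = p) ∧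
  (∀ u v, H.full (ℓ u) (ℓ v) = true → G.Adj u v) ∧
  (∀ u v, H.dotted (ℓ u) (ℓ v) = true → ¬ G.Adj u v)

/-- Label `p` is possible for vertex `v` relative to the partial labeling `pl`. -/
def Possible {V : Type} (G : SimpleGraph V) (H : ModelGraph)
    (pl : V → Option Label) (v : V) (p : Label) : Prop :=
  (∀ q y, H.full p q = true → pl y = some q → G.Adj v y) ∧
  (∀ q y, H.dotted p q = true → pl y = some q → ¬ G.Adj v y)

/-- Full-edge neighborhood of a set of labels. -/
def NFull (H : ModelGraph) (L : Finset Label) : Finset Label :=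
  Finset.univ.filter (fun q => ∃ p ∈ L, H.full p q = true)

/-- Dotted-edge neighborhood of a set of labels. -/
def NDotted (H : ModelGraph) (L : Finset Label) : Finset Label :=
  Finset.univ.filter (fun q => ∃ p ∈ L, H.dotted p q = true)

/-- Class sizes `a,b,c,d` as a function of the label. -/
def cnt (a b c d : ℕ) : Label → ℕ
  | .A => a | .B => b | .C => c | .D => d

lemma card_filter_val_Ico (n lo hi : ℕ) (h : hi ≤ n) :
    (Finset.univ.filter (fun v : Fin n => lo ≤ v.val ∧ v.val < hi)).card = hi - lo := by
  rw [Finset.card_filter]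
  rw [Fin.sum_univ_eq_sum_range (fun i => if lo ≤ i ∧ i < hi then 1 else 0)]
  rw [← Finset.card_filter]
  have : Finset.filter (fun i => lo ≤ i ∧ i < hi) (Finset.range n) = Finset.Ico lo hi := by
    ext i
    simp only [Finset.mem_filter, Finset.mem_range, Finset.mem_Ico]
    omega
  rw [this, Nat.card_Ico]

/-- for every m between m_min and m_max there is a graph with n
vertices and m edges admitting an H-partition with class sizes a,b,c,d. -/
theorem stmt_6 (H : ModelGraph) (a b c d : ℕ)
    (ha : 0 < a) (hb : 0 < b) (hc : 0 < c) (hd : 0 < d)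
    (n : ℕ) (hn : n = a + b + c + d) (m : ℕ)
    (hlow : (∑ p : Label, ∑ q : Label,
        if H.full p q = true then cnt a b c d p * cnt a b c d q else 0) / 2 ≤ m)
    (hhigh : m ≤ n * (n - 1) / 2 -
        (∑ p : Label, ∑ q : Label,
          if H.dotted p q = true then cnt a b c d p * cnt a b c d q else 0) / 2) :
    ∃ (G : SimpleGraph (Fin n)) (ℓ : Fin n → Label),
      IsHPartition G H ℓ ∧ (∀ p : Label, {v | ℓ v = p}.ncard = cnt a b c d p) ∧
      G.edgeSet.ncard = m := by
  classical
  set ℓ : Fin n → Label := fun v =>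
    if v.val < a then .A else if v.val < a + b then .B
    else if v.val < a + b + c then .C else .D with hℓ
  -- class sizes
  have hcard : ∀ p, (Finset.univ.filter (fun v : Fin n => ℓ v = p)).card = cnt a b c d p := by
    intro p
    have trans : ∀ lo hi, hi ≤ n → (∀ i : Fin n, (ℓ i = p ↔ lo ≤ i.val ∧ i.val < hi)) →
        (Finset.univ.filter (fun v : Fin n => ℓ v = p)).card = hi - lo := by
      intro lo hi hle hiff
      rw [show (Finset.univ.filter (fun v : Fin n => ℓ v = p))
          = Finset.univ.filter (fun v : Fin n => lo ≤ v.val ∧ v.val < hi)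
        from Finset.filter_congr (fun i _ => hiff i)]
      exact card_filter_val_Ico n lo hi hle
    cases p
    · have := trans 0 a (by omega) (fun i => by
        simp only [hℓ]; split_ifs with h1 h2 h3 <;> simp <;> omega)
      simpa [cnt] using this
    · have := trans a (a+b) (by omega) (fun i => by
        simp only [hℓ]; split_ifs with h1 h2 h3 <;> simp <;> omega)
      simpa [cnt] using this
    · have := trans (a+b) (a+b+c) (by omega) (fun i => by
        simp only [hℓ]; split_ifs with h1 h2 h3 <;> simp <;> omega)
      simpa [cnt] using this
    · have := trans (a+b+c) n (le_refl n) (fun i => by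
        simp only [hℓ]; split_ifs with h1 h2 h3 <;> simp <;> omega)
      rw [this, hn]; simp [cnt]
  -- generic counting lemma
  have hsum : ∀ g : Label → ℕ, (∑ v : Fin n, g (ℓ v)) = ∑ p : Label, cnt a b c d p * g p := by
    intro g
    rw [← Finset.sum_fiberwise' Finset.univ ℓ g]
    refine Finset.sum_congr rfl fun p _ => ?_
    rw [Finset.sum_const, hcard, smul_eq_mul]
  -- the auxiliary graphs
  let Gfull : SimpleGraph (Fin n) :=
    { Adj := fun u v => H.full (ℓ u) (ℓ v) = true
      symm := ⟨fun u v h => by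
        show H.full (ℓ v) (ℓ u) = true
        rw [H.full_symm]; exact h⟩
      loopless := ⟨fun v h => by simp [H.full_irrefl] at h⟩ }
  let Gdot : SimpleGraph (Fin n) :=
    { Adj := fun u v => H.dotted (ℓ u) (ℓ v) = true
      symm := ⟨fun u v h => by
        show H.dotted (ℓ v) (ℓ u) = true
        rw [H.dotted_symm]; exact h⟩
      loopless := ⟨fun v h => by simp [H.dotted_irrefl] at h⟩ }
  haveI : DecidableRel Gfull.Adj := fun u v => inferInstanceAs (Decidable (_ = true))
  haveI : DecidableRel Gdot.Adj := fun u v => inferInstanceAs (Decidable (_ = true))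
  haveI : DecidableRel (Gdotᶜ).Adj := fun u v => instDecidableAnd
  -- twice-edge-count identities
  have hdeg : ∀ (G0 : SimpleGraph (Fin n)) (inst : DecidableRel G0.Adj)
      (f : Label → Label → Bool), (∀ u v, G0.Adj u v ↔ f (ℓ u) (ℓ v) = true) →
      (∑ p : Label, ∑ q : Label,
        if f p q = true then cnt a b c d p * cnt a b c d q else 0)
        = 2 * G0.edgeFinset.card := by
    intro G0 inst f hf
    rw [← SimpleGraph.sum_degrees_eq_twice_card_edges]
    have : ∀ u, G0.degree u = ∑ v : Fin n, if f (ℓ u) (ℓ v) = true then 1 else 0 := by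
      intro u
      rw [← SimpleGraph.card_neighborFinset_eq_degree]
      have hnb : G0.neighborFinset u = Finset.univ.filter (G0.Adj u) := by
        ext v; simp [SimpleGraph.mem_neighborFinset]
      rw [hnb, Finset.card_filter]
      exact Finset.sum_congr rfl fun v _ => by
        by_cases h : G0.Adj u v
        · rw [if_pos h, if_pos ((hf u v).mp h)]
        · rw [if_neg h, if_neg (fun hh => h ((hf u v).mpr hh))]
    simp only [this]
    rw [hsum (fun p => ∑ v : Fin n, if f p (ℓ v) = true then 1 else 0)]
    refine Finset.sum_congr rfl fun p _ => ?_
    rw [hsum (fun q => if f p q = true then 1 else 0), Finset.mul_sum]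
    refine Finset.sum_congr rfl fun q _ => ?_
    by_cases h : f p q = true <;> simp [h]
  have hfullcard := hdeg Gfull inferInstance H.full (fun u v => Iff.rfl)
  have hdotcard := hdeg Gdot inferInstance H.dotted (fun u v => Iff.rfl)
  -- edge counts of the allowed graph
  have htop : Gdot ⊔ Gdotᶜ = ⊤ := sup_compl_eq_top
  have hallcard : Gdot.edgeFinset.card + (Gdotᶜ).edgeFinset.card = n * (n - 1) / 2 := by
    have hdisj : Disjoint Gdot.edgeFinset (Gdotᶜ).edgeFinset :=
      SimpleGraph.disjoint_edgeFinset.mpr disjoint_compl_right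
    have hsup := SimpleGraph.edgeFinset_sup (G₁ := Gdot) (G₂ := Gdotᶜ)
    have hcc : (Gdot ⊔ Gdotᶜ).edgeFinset = (⊤ : SimpleGraph (Fin n)).edgeFinset := by
      ext e
      rw [SimpleGraph.mem_edgeFinset, SimpleGraph.mem_edgeFinset, htop]
    rw [← Finset.card_union_of_disjoint hdisj, ← hsup, hcc,
      SimpleGraph.card_edgeFinset_top_eq_card_choose_two, Fintype.card_fin,
      Nat.choose_two_right]
  -- the mandatory edges are allowed
  have hle : Gfull ≤ Gdotᶜ := by
    intro u v h
    refine ⟨Gfull.ne_of_adj h, fun hd => H.not_both _ _ ⟨h, hd⟩⟩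
  have hsub : Gfull.edgeFinset ⊆ (Gdotᶜ).edgeFinset := SimpleGraph.edgeFinset_mono hle
  -- bounds on m
  have hFm : Gfull.edgeFinset.card ≤ m := by omega
  have hmA : m ≤ (Gdotᶜ).edgeFinset.card := by omega
  obtain ⟨S, hFS, hSall, hScard⟩ := Finset.exists_subsuperset_card_eq hsub hFm hmA
  refine ⟨SimpleGraph.fromEdgeSet ↑S, ℓ, ⟨?_, ?_, ?_⟩, ?_, ?_⟩
  · -- nonempty classes
    intro p
    have : 0 < (Finset.univ.filter (fun v : Fin n => ℓ v = p)).card := by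
      rw [hcard]; cases p <;> simpa [cnt]
    obtain ⟨v, hv⟩ := Finset.card_pos.mp this
    exact ⟨v, (Finset.mem_filter.mp hv).2⟩
  · -- full edges present
    intro u v h
    have hne : u ≠ v := by
      rintro rfl
      rw [H.full_irrefl] at h
      exact Bool.false_ne_true h
    refine (SimpleGraph.fromEdgeSet_adj _).mpr ⟨?_, hne⟩
    exact hFS (SimpleGraph.mem_edgeFinset.mpr (h : Gfull.Adj u v))
  · -- dotted edges absent
    intro u v h hadj
    have hmem := (SimpleGraph.fromEdgeSet_adj _).mp hadj
    have : (Gdotᶜ).Adj u v := SimpleGraph.mem_edgeFinset.mp (hSall hmem.1)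
    exact this.2 h
  · -- class sizes
    intro p
    have : {v | ℓ v = p} = ↑(Finset.univ.filter (fun v : Fin n => ℓ v = p)) := by
      ext v; simp
    rw [this, Set.ncard_coe_finset, hcard]
  · -- edge count
    have hnodiag : ∀ e ∈ S, ¬ e.IsDiag := by
      intro e he
      exact SimpleGraph.not_isDiag_of_mem_edgeSet _ (SimpleGraph.mem_edgeFinset.mp (hSall he))
    have : (SimpleGraph.fromEdgeSet (↑S : Set (Sym2 (Fin n)))).edgeSet = ↑S := by
      rw [SimpleGraph.edgeSet_fromEdgeSet]
      ext e
      simp only [Set.mem_diff, Finset.mem_coe, Set.mem_setOf_eq, and_iff_left_iff_imp]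
      exact fun he => hnodiag e he
    rw [this, Set.ncard_coe_finset, hScard]
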